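/- Let s = s_1, which is initial in c, and let y ∈ W_{⟨s⟩} be sc-sortable. Then the Cambrian cone Cone_c(y) ⊆ V* equals the Minkowski sum ι(Cone_{sc}(y)) + ℝ_{≥0}·ρ_s, where Cone_{sc}(y) ⊆ V_{⟨s⟩}* is the sc-Cambrian cone of y computed in the parabolic subgroup W_{⟨s⟩}, ι : V_{⟨s⟩}* → H_{α_s} is the inverse of the linear isomorphism obtained by restricting functionals in the hyperplane H_{α_s} to V_{⟨s⟩}, and ρ_s ∈ V* is the fundamental coweight dual to α_s. -/

import Mathlib

/-- The underlying (undirected) graph of a quiver on vertex set `Fin n`,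
where `q i j` is the number of arrows from `i` to `j`. -/
def quiverGraph {n : ℕ} (q : Fin n → Fin n → ℕ) : SimpleGraph (Fin n) where
  Adj i j := i ≠ j ∧ q i j + q j i ≠ 0
  symm := ⟨fun i j ⟨h1, h2⟩ => ⟨h1.symm, by omega⟩⟩
  loopless := ⟨fun i h => h.1 rfl⟩

/-- The Coxeter matrix associated to a quiver: `m i j = 2` if there is no arrow
between `i` and `j`, `3` if there is exactly one, and `∞` (encoded `0`) if there
are at least two. -/
def quiverCoxeterMatrix {n : ℕ} (q : Fin n → Fin n → ℕ) : CoxeterMatrix (Fin n) where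
  M i j := if i = j then 1 else
    if q i j + q j i = 0 then 2 else if q i j + q j i = 1 then 3 else 0
  isSymm := by
    refine Matrix.IsSymm.ext fun i j => ?_
    try dsimp only
    rcases eq_or_ne i j with h | h
    · simp [h]
    · rw [if_neg h, if_neg (Ne.symm h), Nat.add_comm (q j i) (q i j)]
  diagonal := fun i => by simp
  off_diagonal := fun i j h => by
    simp only [if_neg h]
    split <;> [skip; split] <;> simp

variable {n : ℕ} {W : Type*} [Group W] {M : CoxeterMatrix (Fin n)}

/-- The (right) weak order on `W`: `v ≤ w` iff `ℓ(w) = ℓ(v) + ℓ(v⁻¹ w)`. -/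
def weakLe (cs : CoxeterSystem M W) (v w : W) : Prop :=
  cs.length w = cs.length v + cs.length (v⁻¹ * w)

/-- The strict weak order. -/
def weakLt (cs : CoxeterSystem M W) (v w : W) : Prop :=
  weakLe cs v w ∧ v ≠ w

/-- The Coxeter element `c = s₁ s₂ ⋯ sₙ`. -/
def coxeterElement (cs : CoxeterSystem M W) : W :=
  cs.wordProd (List.finRange n)

/-- `w` admits a reduced expression `c⁽⁰⁾ c⁽¹⁾ ⋯ c⁽ᵐ⁾` where each `c⁽ᵗ⁾` is a
subword of the word `cw` and the supports of the `c⁽ᵗ⁾` are weakly decreasing. -/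
def IsSortableWord (cs : CoxeterSystem M W) (cw : List (Fin n)) (w : W) : Prop :=
  ∃ L : List (List (Fin n)),
    (∀ l ∈ L, l.Sublist cw) ∧
    L.Chain' (fun a b => ∀ i ∈ b, i ∈ a) ∧
    cs.IsReduced L.flatten ∧
    cs.wordProd L.flatten = w

/-- `w` is `c`-sortable for the Coxeter element `c = s₁ s₂ ⋯ sₙ`. -/
def IsCSortable (cs : CoxeterSystem M W) (w : W) : Prop :=
  IsSortableWord cs (List.finRange n) w

/-- `p` is the image of `w` under Reading's projection `π^c` associated to the
Coxeter element given (as a word) by `cw`: `p` is sortable, `p ≤ w` in weak order,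
and every sortable element below `w` is below `p`. -/
def IsPiWord (cs : CoxeterSystem M W) (cw : List (Fin n)) (w p : W) : Prop :=
  IsSortableWord cs cw p ∧ weakLe cs p w ∧
    ∀ z, IsSortableWord cs cw z → weakLe cs z w → weakLe cs z p

/-- `p = π^c(w)`, for `c = s₁ s₂ ⋯ sₙ`. -/
def IsPiC (cs : CoxeterSystem M W) (w p : W) : Prop :=
  IsPiWord cs (List.finRange n) w p

open Pointwise

/-- The simple root `αᵢ` in `V = Fin n → ℝ` (the `i`-th standard basis vector). -/
noncomputable def simpleRootV {n : ℕ} (i : Fin n) : Fin n → ℝ := Pi.single i 1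

/-- The value `(αᵢ, αⱼ)` of the symmetric bilinear form on the simple roots:
`2` on the diagonal and minus the number of arrows between `i` and `j` otherwise. -/
def cartanEntry {n : ℕ} (q : Fin n → Fin n → ℕ) (i j : Fin n) : ℝ :=
  if i = j then 2 else -((q i j + q j i : ℕ) : ℝ)

/-- The simple reflection `sᵢ` acting on `V`: `v ↦ v − (αᵢ, v) αᵢ`. -/
noncomputable def simpleReflectV {n : ℕ} (q : Fin n → Fin n → ℕ) (i : Fin n)
    (v : Fin n → ℝ) : Fin n → ℝ :=
  v - (∑ j, cartanEntry q i j * v j) • simpleRootV i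

/-- `IsCSet q cs cw x C` means that `C = C_c(x)` where the Coxeter element `c`
(of the current standard parabolic subgroup) is given by the reduced word `cw`
and `x` is a `c`-sortable element of that parabolic subgroup.  This is the
recursive definition: `C_c(1) = ∅` in the trivial parabolic; if `ℓ(sx) > ℓ(x)`
(with `s` the initial letter of `cw`) then `C_c(x) = C_{sc}(x) ∪ {α_s}`, and if
`ℓ(sx) < ℓ(x)` then `C_c(x) = s · C_{scs}(sx)`. -/
inductive IsCSet {n : ℕ} (q : Fin n → Fin n → ℕ) {W : Type*} [Group W]
    (cs : CoxeterSystem (quiverCoxeterMatrix q) W) :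
    List (Fin n) → W → Set (Fin n → ℝ) → Prop
  | nil : IsCSet q cs [] 1 ∅
  | up {i : Fin n} {cw : List (Fin n)} {x : W} {C : Set (Fin n → ℝ)} :
      cs.length x < cs.length (cs.simple i * x) →
      IsCSet q cs cw x C →
      IsCSet q cs (i :: cw) x (insert (simpleRootV i) C)
  | down {i : Fin n} {cw : List (Fin n)} {x : W} {C : Set (Fin n → ℝ)} :
      cs.length (cs.simple i * x) < cs.length x →
      IsCSet q cs (cw ++ [i]) (cs.simple i * x) C →
      IsCSet q cs (i :: cw) x (simpleReflectV q i '' C)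

namespace CProof

variable {n : ℕ} {q : Fin n → Fin n → ℕ}

noncomputable def cform (q : Fin n → Fin n → ℕ) (i : Fin n) (v : Fin n → ℝ) : ℝ :=
  ∑ j, cartanEntry q i j * v j

lemma sr_def (i : Fin n) (v : Fin n → ℝ) :
    simpleReflectV q i v = v - cform q i v • simpleRootV i := rfl

lemma cartanEntry_self (i : Fin n) : cartanEntry q i i = 2 := if_pos rfl

lemma cform_single (i k : Fin n) (r : ℝ) :
    cform q i (r • simpleRootV k) = r * cartanEntry q i k := by
  unfold cform simpleRootV
  rw [Finset.sum_eq_single k]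
  · simp [Pi.single_apply, mul_comm]
  · intro b _ hb
    simp [Pi.single_apply, hb]
  · simp

lemma cform_sub (i : Fin n) (v w : Fin n → ℝ) :
    cform q i (v - w) = cform q i v - cform q i w := by
  unfold cform
  rw [← Finset.sum_sub_distrib]
  congr 1; ext j; simp [mul_sub]

lemma sr_sub_sub (i k : Fin n) (p r : ℝ) (v : Fin n → ℝ) :
    simpleReflectV q i (v - p • simpleRootV i - r • simpleRootV k) =
      v - (cform q i v - 2 * p - r * cartanEntry q i k + p) • simpleRootV i
        - r • simpleRootV k := by
  rw [sr_def, cform_sub, cform_sub, cform_single, cform_single, cartanEntry_self]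
  module

lemma sr_sub_sub' (i k : Fin n) (p r : ℝ) (v : Fin n → ℝ) :
    simpleReflectV q i (v - r • simpleRootV k - p • simpleRootV i) =
      v - r • simpleRootV k
        - (cform q i v - 2 * p - r * cartanEntry q i k + p) • simpleRootV i := by
  rw [sr_def, cform_sub, cform_sub, cform_single, cform_single, cartanEntry_self]
  module

lemma sr_invol (i : Fin n) (v : Fin n → ℝ) :
    simpleReflectV q i (simpleReflectV q i v) = v := by
  rw [sr_def, sr_def, cform_sub, cform_single, cartanEntry_self]
  module

end CProof

namespace CProof

/-- The geometric simple reflection as a permutation of `V`. -/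
noncomputable def srPerm (q : Fin n → Fin n → ℕ) (i : Fin n) : Equiv.Perm (Fin n → ℝ) :=
  ⟨simpleReflectV q i, simpleReflectV q i, sr_invol i, sr_invol i⟩

lemma srPerm_apply (i : Fin n) (v : Fin n → ℝ) : srPerm q i v = simpleReflectV q i v := rfl

lemma sr_base (i k : Fin n) (v : Fin n → ℝ) :
    simpleReflectV q i v =
      v - (cform q i v) • simpleRootV i - (0:ℝ) • simpleRootV k := by
  rw [sr_def]; module

lemma sr_rel_two (i j : Fin n) (hij : cartanEntry q i j = 0) (hji : cartanEntry q j i = 0)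
    (v : Fin n → ℝ) :
    simpleReflectV q i (simpleReflectV q j (simpleReflectV q i (simpleReflectV q j v))) = v := by
  rw [sr_base j i v, sr_sub_sub' i j, sr_sub_sub j i, sr_sub_sub' i j, hij, hji]
  ring_nf
  module

lemma sr_rel_three (i j : Fin n) (hij : cartanEntry q i j = -1) (hji : cartanEntry q j i = -1)
    (v : Fin n → ℝ) :
    simpleReflectV q i (simpleReflectV q j (simpleReflectV q i (simpleReflectV q j
      (simpleReflectV q i (simpleReflectV q j v))))) = v := by
  rw [sr_base j i v, sr_sub_sub' i j, sr_sub_sub j i, sr_sub_sub' i j, sr_sub_sub j i,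
    sr_sub_sub' i j, hij, hji]
  ring_nf
  module

end CProof

namespace CProof
variable {n : ℕ} {q : Fin n → Fin n → ℕ}

lemma srPerm_liftable (q : Fin n → Fin n → ℕ) :
    CoxeterMatrix.IsLiftable (quiverCoxeterMatrix q) (srPerm q) := by
  intro i j
  show (srPerm q i * srPerm q j) ^ (if i = j then 1 else
    if q i j + q j i = 0 then 2 else if q i j + q j i = 1 then 3 else 0) = 1
  rcases eq_or_ne i j with rfl | hij
  · rw [if_pos rfl, pow_one]
    apply Equiv.ext; intro v
    simp only [Equiv.Perm.mul_apply, Equiv.Perm.one_apply, srPerm_apply]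
    exact sr_invol i (v := v)
  · rw [if_neg hij]
    rcases h0 : q i j + q j i with _ | m
    · rw [if_pos rfl]
      apply Equiv.ext; intro v
      rw [Equiv.Perm.one_apply]
      have hij0 : cartanEntry q i j = 0 := by unfold cartanEntry; rw [if_neg hij, h0]; simp
      have hji0 : cartanEntry q j i = 0 := by
        unfold cartanEntry; rw [if_neg hij.symm, Nat.add_comm, h0]; simp
      show ((srPerm q i * srPerm q j) ^ 2) v = v
      simp only [pow_succ, pow_zero, one_mul, Equiv.Perm.mul_apply, srPerm_apply]
      exact sr_rel_two i j hij0 hji0 v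
    · rcases m with _ | m
      · rw [if_neg (by omega), if_pos rfl]
        apply Equiv.ext; intro v
        rw [Equiv.Perm.one_apply]
        have hij1 : cartanEntry q i j = -1 := by unfold cartanEntry; rw [if_neg hij, h0]; simp
        have hji1 : cartanEntry q j i = -1 := by
          unfold cartanEntry; rw [if_neg hij.symm, Nat.add_comm, h0]; simp
        show ((srPerm q i * srPerm q j) ^ 3) v = v
        simp only [pow_succ, pow_zero, one_mul, Equiv.Perm.mul_apply, srPerm_apply]
        exact sr_rel_three i j hij1 hji1 v
      · rw [if_neg (by omega), if_neg (by omega), pow_zero]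

end CProof

namespace CProof
variable {n : ℕ} {q : Fin n → Fin n → ℕ} {W : Type*} [Group W]

/-- The geometric representation of `W`. -/
noncomputable def phiV (cs : CoxeterSystem (quiverCoxeterMatrix q) W) :
    W →* Equiv.Perm (Fin n → ℝ) :=
  cs.lift ⟨srPerm q, srPerm_liftable q⟩

lemma phiV_simple (cs : CoxeterSystem (quiverCoxeterMatrix q) W) (i : Fin n) :
    phiV cs (cs.simple i) = srPerm q i :=
  cs.lift_apply_simple (srPerm_liftable q) i

lemma sr_coord {i z : Fin n} (hi : i ≠ z) (v : Fin n → ℝ) :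
    simpleReflectV q i v z = v z := by
  simp [simpleReflectV, simpleRootV, Pi.single_eq_of_ne (Ne.symm hi)]

lemma phiV_word_coord (cs : CoxeterSystem (quiverCoxeterMatrix q) W)
    (χ : List (Fin n)) {z : Fin n} (hχ : z ∉ χ) (u : Fin n → ℝ) :
    (phiV cs (cs.wordProd χ) u) z = u z := by
  induction χ generalizing u with
  | nil => simp [CoxeterSystem.wordProd_nil]
  | cons i χ ih =>
    rw [cs.wordProd_cons, map_mul, Equiv.Perm.mul_apply, phiV_simple, srPerm_apply]
    rw [sr_coord (by rintro rfl; exact hχ List.mem_cons_self)]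
    exact ih (fun h => hχ (List.mem_cons_of_mem i h)) u

lemma phiV_word_inv_coord (cs : CoxeterSystem (quiverCoxeterMatrix q) W)
    (χ : List (Fin n)) {z : Fin n} (hχ : z ∉ χ) (u : Fin n → ℝ) :
    (phiV cs (cs.wordProd χ)⁻¹ u) z = u z := by
  rw [← cs.wordProd_reverse]
  exact phiV_word_coord cs χ.reverse (by simpa using hχ) u

lemma conj_ne_simple (cs : CoxeterSystem (quiverCoxeterMatrix q) W)
    (χ : List (Fin n)) {j z : Fin n} (hz : z ∉ χ) (hj : j ≠ z) :
    (cs.wordProd χ)⁻¹ * cs.simple j * cs.wordProd χ ≠ cs.simple z := by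
  intro h
  have h2 := congrFun (congrArg (fun w => (phiV cs w : (Fin n → ℝ) → (Fin n → ℝ)))
    h) (simpleRootV z)
  simp only [map_mul, map_inv] at h2
  rw [Equiv.Perm.mul_apply, Equiv.Perm.mul_apply] at h2
  have h3 := congrFun h2 z
  rw [phiV_simple, phiV_simple, srPerm_apply, srPerm_apply] at h3
  have hL : (phiV cs (cs.wordProd χ))⁻¹
      (simpleReflectV q j (phiV cs (cs.wordProd χ) (simpleRootV z))) z = 1 := by
    rw [← map_inv]
    rw [phiV_word_inv_coord cs χ hz, sr_coord hj, phiV_word_coord cs χ hz]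
    simp [simpleRootV]
  have hR : simpleReflectV q z (simpleRootV z) z = -1 := by
    have : cform q z (simpleRootV z) = 2 := by
      have := cform_single (q := q) z z 1
      rwa [one_smul, one_mul, cartanEntry_self] at this
    rw [sr_def, this]
    simp [simpleRootV]
    norm_num
  rw [h3, hR] at hL
  norm_num at hL

end CProof

namespace CProof
section Parity
variable {B : Type*} {W : Type*} [Group W] {M : CoxeterMatrix B}

noncomputable def deltaZ (t r : W) : ZMod 2 :=
  @ite _ (t = r) (Classical.dec _) 1 0

omit [Group W] in
lemma deltaZ_congr {t r t' r' : W} (h : (t = r) ↔ (t' = r')) :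
    deltaZ t r = deltaZ t' r' := by
  unfold deltaZ
  split_ifs with h1 h2
  · rfl
  · exact absurd (h.mp h1) h2
  · exact absurd (h.mpr ‹_›) h1
  · rfl

lemma conj_pow_simple (a b : W) (k : ℕ) : a * (b * a) ^ k = (a * b) ^ k * a := by
  induction k with
  | zero => simp
  | succ k ih =>
    rw [pow_succ, pow_succ, ← mul_assoc, ih]
    group

lemma conj_eq_iff (g w r : W) : (g * w * g⁻¹ = r) ↔ (w = g⁻¹ * r * g) := by
  constructor
  · intro h; rw [← h]; group
  · intro h; rw [h]; group

variable (cs : CoxeterSystem M W)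

local prefix:100 "s" => cs.simple

lemma conj_conj (i : B) (w : W) : s i * (s i * w * s i) * s i = w := by
  simp only [← mul_assoc]
  rw [cs.simple_mul_simple_self, one_mul, mul_assoc, cs.simple_mul_simple_self, mul_one]

lemma conj_simple_eq_iff (i : B) (w r : W) :
    (s i * w * s i = r) ↔ (w = s i * r * s i) := by
  constructor
  · intro h; rw [← h, conj_conj]
  · intro h; rw [h, conj_conj]

/-- The Tits parity permutation associated to a simple reflection. -/
noncomputable def etaP (i : B) : Equiv.Perm (W × ZMod 2) where
  toFun x := (s i * x.1 * s i, x.2 + deltaZ x.1 (s i))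
  invFun x := (s i * x.1 * s i, x.2 + deltaZ x.1 (s i))
  left_inv x := by
    have h2 : deltaZ (s i * x.1 * s i) (s i) = deltaZ x.1 (s i) := by
      apply deltaZ_congr
      rw [conj_simple_eq_iff, cs.simple_mul_simple_self, one_mul]
    refine Prod.ext (conj_conj cs i x.1) ?_
    show x.2 + deltaZ x.1 (s i) + deltaZ (s i * x.1 * s i) (s i) = x.2
    rw [h2, add_assoc, CharTwo.add_self_eq_zero, add_zero]
  right_inv x := by
    have h2 : deltaZ (s i * x.1 * s i) (s i) = deltaZ x.1 (s i) := by
      apply deltaZ_congr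
      rw [conj_simple_eq_iff, cs.simple_mul_simple_self, one_mul]
    refine Prod.ext (conj_conj cs i x.1) ?_
    show x.2 + deltaZ x.1 (s i) + deltaZ (s i * x.1 * s i) (s i) = x.2
    rw [h2, add_assoc, CharTwo.add_self_eq_zero, add_zero]

lemma etaP_apply (i : B) (x : W × ZMod 2) :
    etaP cs i x = (s i * x.1 * s i, x.2 + deltaZ x.1 (s i)) := rfl

lemma etaPP_apply (i j : B) (t : W) (ε : ZMod 2) :
    (etaP cs i * etaP cs j) (t, ε) =
      (s i * (s j * t * s j) * s i,
        ε + deltaZ t (s j) + deltaZ (s j * t * s j) (s i)) := rfl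

lemma pow_inv_simple (i j : B) (k : ℕ) :
    ((s i * s j) ^ k)⁻¹ = (s j * s i) ^ k := by
  rw [← inv_pow, mul_inv_rev, cs.inv_simple, cs.inv_simple]

lemma sj_pow (i j : B) (k : ℕ) :
    s j * (s i * s j) ^ k = (s j * s i) ^ k * s j :=
  conj_pow_simple _ _ k

lemma pow_conj_sj (i j : B) (k : ℕ) :
    ((s i * s j) ^ k)⁻¹ * (s j * (s i * s j) ^ k) = (s j * s i) ^ (2 * k) * s j := by
  rw [pow_inv_simple, sj_pow, ← mul_assoc, ← pow_add, two_mul]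

lemma pow_conj_sjsisj (i j : B) (k : ℕ) :
    ((s i * s j) ^ k)⁻¹ * (s j * s i * s j * (s i * s j) ^ k) =
      (s j * s i) ^ (2 * k + 1) * s j := by
  have h : s j * s i * s j * (s i * s j) ^ k = (s j * s i) ^ (k + 1) * s j := by
    rw [mul_assoc (s j * s i), sj_pow, ← mul_assoc, ← pow_succ']
  rw [pow_inv_simple, h, ← mul_assoc, ← pow_add]
  congr 2
  omega

lemma etaP_pow (i j : B) (k : ℕ) (t : W) (ε : ZMod 2) :
    ((etaP cs i * etaP cs j) ^ k) (t, ε) =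
      ((s i * s j) ^ k * t * ((s i * s j) ^ k)⁻¹,
        ε + ∑ u ∈ Finset.range (2 * k), deltaZ t ((s j * s i) ^ u * s j)) := by
  induction k with
  | zero => simp
  | succ k ih =>
    rw [pow_succ', Equiv.Perm.mul_apply, ih, etaPP_apply]
    have key1 : deltaZ ((s i * s j) ^ k * t * ((s i * s j) ^ k)⁻¹) (s j)
        = deltaZ t ((s j * s i) ^ (2 * k) * s j) := by
      apply deltaZ_congr
      rw [conj_eq_iff, mul_assoc, pow_conj_sj]
    have key2 : deltaZ (s j * ((s i * s j) ^ k * t * ((s i * s j) ^ k)⁻¹) * s j) (s i)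
        = deltaZ t ((s j * s i) ^ (2 * k + 1) * s j) := by
      apply deltaZ_congr
      rw [conj_simple_eq_iff, conj_eq_iff, mul_assoc, pow_conj_sjsisj]
    refine Prod.ext ?_ ?_
    · show s i * ((s j * ((s i * s j) ^ k * t * ((s i * s j) ^ k)⁻¹)) * s j) * s i
        = (s i * s j) ^ (k + 1) * t * ((s i * s j) ^ (k + 1))⁻¹
      rw [pow_inv_simple, pow_inv_simple, pow_succ' (s i * s j) k, pow_succ (s j * s i) k]
      simp only [mul_assoc]
    · show ε + ∑ u ∈ Finset.range (2 * k), deltaZ t ((s j * s i) ^ u * s j)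
          + deltaZ ((s i * s j) ^ k * t * ((s i * s j) ^ k)⁻¹) (s j)
          + deltaZ (s j * ((s i * s j) ^ k * t * ((s i * s j) ^ k)⁻¹) * s j) (s i)
        = ε + ∑ u ∈ Finset.range (2 * (k + 1)), deltaZ t ((s j * s i) ^ u * s j)
      rw [key1, key2, show 2 * (k + 1) = (2 * k) + 1 + 1 by ring, Finset.sum_range_succ,
        Finset.sum_range_succ]
      ring

lemma etaP_liftable : CoxeterMatrix.IsLiftable M (etaP cs) := by
  intro i j
  have hrel : (s i * s j) ^ M i j = 1 := cs.simple_mul_simple_pow i j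
  have hrel' : (s j * s i) ^ M i j = 1 := cs.simple_mul_simple_pow' i j
  apply Equiv.ext
  rintro ⟨t, ε⟩
  rw [etaP_pow, hrel]
  have hsum : ∑ u ∈ Finset.range (2 * M i j), deltaZ t ((s j * s i) ^ u * s j) = 0 := by
    rw [two_mul, Finset.sum_range_add]
    have : ∀ u, deltaZ t ((s j * s i) ^ (M i j + u) * s j)
        = deltaZ t ((s j * s i) ^ u * s j) := by
      intro u
      apply deltaZ_congr
      rw [pow_add, hrel', one_mul]
    simp only [this]
    rw [CharTwo.add_self_eq_zero]
  rw [hsum]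
  simp

/-- The Tits parity representation. -/
noncomputable def phiP : W →* Equiv.Perm (W × ZMod 2) :=
  cs.lift ⟨etaP cs, etaP_liftable cs⟩

lemma phiP_simple (i : B) : phiP cs (s i) = etaP cs i :=
  cs.lift_apply_simple (etaP_liftable cs) i

lemma phiP_wordProd (ω : List B) (t : W) (ε : ZMod 2) :
    phiP cs (cs.wordProd ω) (t, ε) =
      (cs.wordProd ω * t * (cs.wordProd ω)⁻¹,
        ε + ((cs.rightInvSeq ω).map (deltaZ t)).sum) := by
  induction ω generalizing ε with
  | nil => simp [CoxeterSystem.wordProd_nil]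
  | cons i ω ih =>
    rw [cs.wordProd_cons, map_mul, Equiv.Perm.mul_apply, ih, phiP_simple, etaP_apply]
    show (s i * (cs.wordProd ω * t * (cs.wordProd ω)⁻¹) * s i, _) = _
    refine Prod.ext ?_ ?_
    · show s i * (cs.wordProd ω * t * (cs.wordProd ω)⁻¹) * s i
        = s i * cs.wordProd ω * t * (s i * cs.wordProd ω)⁻¹
      rw [mul_inv_rev, cs.inv_simple]
      simp only [mul_assoc]
    · show ε + ((cs.rightInvSeq ω).map (deltaZ t)).sum
          + deltaZ (cs.wordProd ω * t * (cs.wordProd ω)⁻¹) (s i)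
        = ε + ((cs.rightInvSeq (i :: ω)).map (deltaZ t)).sum
      have hris : cs.rightInvSeq (i :: ω)
          = ((cs.wordProd ω)⁻¹ * s i * cs.wordProd ω) :: cs.rightInvSeq ω := rfl
      rw [hris, List.map_cons, List.sum_cons]
      have : deltaZ (cs.wordProd ω * t * (cs.wordProd ω)⁻¹) (s i)
          = deltaZ t ((cs.wordProd ω)⁻¹ * s i * cs.wordProd ω) := by
        apply deltaZ_congr
        rw [conj_eq_iff]
      rw [this]
      ring

/-- Parity invariance: the mod-2 inversion count depends only on the group element. -/
lemma ris_parity_invariant {ω ω' : List B} (h : cs.wordProd ω = cs.wordProd ω') (t : W) :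
    ((cs.rightInvSeq ω).map (deltaZ t)).sum = ((cs.rightInvSeq ω').map (deltaZ t)).sum := by
  have h1 := phiP_wordProd cs ω t 0
  have h2 := phiP_wordProd cs ω' t 0
  rw [h] at h1
  rw [h1] at h2
  have := congrArg Prod.snd h2
  simpa using this

end Parity
end CProof

namespace CProof
section NoDescent
variable {B : Type*} {W : Type*} [Group W] {M : CoxeterMatrix B}

omit [Group W] in
lemma sum_map_deltaZ_eq_zero {l : List W} {t : W} (ht : t ∉ l) :
    (l.map (deltaZ t)).sum = 0 := by
  induction l with
  | nil => simp
  | cons a l ih =>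
    rw [List.map_cons, List.sum_cons, ih (fun h => ht (List.mem_cons_of_mem a h))]
    have : deltaZ t a = 0 := by
      unfold deltaZ
      rw [if_neg (fun h => ht (by rw [h]; exact List.mem_cons_self))]
    rw [this, add_zero]

omit [Group W] in
lemma sum_map_deltaZ_eq_one {l : List W} (hnd : l.Nodup) {t : W} (ht : t ∈ l) :
    (l.map (deltaZ t)).sum = 1 := by
  induction l with
  | nil => simp at ht
  | cons a l ih =>
    rw [List.map_cons, List.sum_cons]
    rcases List.mem_cons.mp ht with rfl | hm
    · have h0 : (l.map (deltaZ t)).sum = 0 :=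
        sum_map_deltaZ_eq_zero (List.nodup_cons.mp hnd).1
      have h1 : deltaZ t t = 1 := by unfold deltaZ; rw [if_pos rfl]
      rw [h0, h1, add_zero]
    · have h1 : deltaZ t a = 0 := by
        unfold deltaZ
        rw [if_neg]
        rintro rfl
        exact (List.nodup_cons.mp hnd).1 hm
      rw [h1, ih (List.nodup_cons.mp hnd).2 hm, zero_add]

end NoDescent

section Main
variable {n : ℕ} {q : Fin n → Fin n → ℕ} {W : Type*} [Group W]
variable (cs : CoxeterSystem (quiverCoxeterMatrix q) W)

/-- A word avoiding the letter `z` cannot have `s z` as a left descent. -/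
lemma no_left_descent_of_avoiding {z : Fin n} {ω : List (Fin n)} (hz : z ∉ ω) {y : W}
    (hπ : cs.wordProd ω = y)
    (hlt : cs.length (cs.simple z * y) < cs.length y) : False := by
  set w := y⁻¹ with hw
  set u := w * cs.simple z with hu
  have hlu : cs.length u = cs.length (cs.simple z * y) := by
    rw [hu, hw, show y⁻¹ * cs.simple z = (cs.simple z * y)⁻¹ by
      rw [mul_inv_rev, cs.inv_simple], cs.length_inv]
  have hlw : cs.length w = cs.length y := cs.length_inv y
  obtain ⟨ψ, hψred, hψ⟩ := cs.exists_reduced_word' u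
  have hχπ : cs.wordProd (ψ ++ [z]) = w := by
    rw [cs.wordProd_append, CoxeterSystem.wordProd_singleton, ← hψ, hu,
      CoxeterSystem.simple_mul_simple_cancel_right]
  have hwlen : cs.length w = cs.length u + 1 := by
    have h1 : cs.length w ≤ cs.length u + 1 := by
      calc cs.length w = cs.length (u * cs.simple z) := by
            rw [hu, CoxeterSystem.simple_mul_simple_cancel_right]
        _ ≤ cs.length u + cs.length (cs.simple z) := cs.length_mul_le u (cs.simple z)
        _ = cs.length u + 1 := by rw [cs.length_simple]
    omega
  have hχred : cs.IsReduced (ψ ++ [z]) := by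
    unfold CoxeterSystem.IsReduced
    rw [hχπ, List.length_append, List.length_singleton, hwlen, hψ, hψred]
  have hmem : cs.simple z ∈ cs.rightInvSeq (ψ ++ [z]) := by
    rw [← List.concat_eq_append, cs.rightInvSeq_concat]
    simp
  have S1 : ((cs.rightInvSeq (ψ ++ [z])).map (deltaZ (cs.simple z))).sum = 1 :=
    sum_map_deltaZ_eq_one (hχred.nodup_rightInvSeq) hmem
  have S2 : ((cs.rightInvSeq ω.reverse).map (deltaZ (cs.simple z))).sum = 0 := by
    apply sum_map_deltaZ_eq_zero
    intro hmem'
    obtain ⟨j, hj, hval⟩ := List.mem_iff_getElem.mp hmem'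
    rw [cs.length_rightInvSeq] at hj
    rw [← List.getD_eq_getElem _ 1 (by rw [cs.length_rightInvSeq]; exact hj)] at hval
    rw [cs.getD_rightInvSeq] at hval
    have hletter : (ω.reverse[j]?) = some (ω.reverse.get ⟨j, hj⟩) := List.getElem?_eq_getElem hj
    rw [hletter] at hval
    simp only [Option.map_some, Option.getD_some] at hval
    have hlmem : ω.reverse.get ⟨j, hj⟩ ∈ ω.reverse := List.get_mem _ ⟨j, hj⟩
    have hlne : ω.reverse.get ⟨j, hj⟩ ≠ z := by
      rintro h
      rw [h] at hlmem
      exact hz (List.mem_reverse.mp hlmem)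
    have hzdrop : z ∉ ω.reverse.drop (j + 1) := by
      intro h
      exact hz (List.mem_reverse.mp (List.drop_subset _ _ h))
    exact conj_ne_simple cs (ω.reverse.drop (j + 1)) hzdrop hlne hval
  have hππ : cs.wordProd ω.reverse = cs.wordProd (ψ ++ [z]) := by
    rw [cs.wordProd_reverse, hπ, hχπ]
  have := ris_parity_invariant cs hππ (cs.simple z)
  rw [S1, S2] at this
  exact absurd this (by decide)

end Main
end CProof

namespace CProof
section Final
variable {n : ℕ} {q : Fin n → Fin n → ℕ} {W : Type*} [Group W]
variable {cs : CoxeterSystem (quiverCoxeterMatrix q) W}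

lemma isCSet_unique {cw : List (Fin n)} {x : W} {C C' : Set (Fin n → ℝ)}
    (h : IsCSet q cs cw x C) (h' : IsCSet q cs cw x C') : C = C' := by
  induction h generalizing C' with
  | nil => cases h'; rfl
  | up hlen hsub ih =>
    cases h' with
    | up hlen' hsub' => rw [ih hsub']
    | down hlen' hsub' => omega
  | down hlen hsub ih =>
    cases h' with
    | up hlen' hsub' => omega
    | down hlen' hsub' => rw [ih hsub']

lemma isCSet_coord_zero {z : Fin n} {cw : List (Fin n)} {x : W} {C : Set (Fin n → ℝ)}
    (h : IsCSet q cs cw x C) (hz : z ∉ cw) :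
    ∀ β ∈ C, β z = 0 := by
  induction h with
  | nil => simp
  | @up i cw x C hlen hsub ih =>
    intro β hβ
    rcases Set.mem_insert_iff.mp hβ with rfl | hβC
    · have hiz : i ≠ z := by rintro rfl; exact hz List.mem_cons_self
      exact Pi.single_eq_of_ne (Ne.symm hiz) 1
    · exact ih (fun h => hz (List.mem_cons_of_mem i h)) β hβC
  | @down i cw x C hlen hsub ih =>
    intro β hβ
    obtain ⟨β', hβ', rfl⟩ := hβ
    have hiz : i ≠ z := by rintro rfl; exact hz List.mem_cons_self
    have hzcw : z ∉ cw ++ [i] := by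
      intro h
      rcases List.mem_append.mp h with h | h
      · exact hz (List.mem_cons_of_mem i h)
      · exact hiz (List.mem_singleton.mp h).symm
    rw [sr_coord hiz]
    exact ih hzcw β' hβ'

end Final
end CProof

/-- Let `s = s₁` (the initial letter of `c`) and let
`y ∈ W_⟨s⟩` be `sc`-sortable.  Then the Cambrian cone `Cone_c(y) ⊆ V*` is the
Minkowski sum of the cone `Cone_{sc}(y)` drawn in the hyperplane `H_{α_s}`
(i.e. the functionals vanishing on `α_s` and nonnegative on `C_{sc}(y)`) and the
ray spanned by the fundamental coweight `ρ_s` (the coordinate functional at `s`). -/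
theorem cambrian_cone_eq_parabolic_cone_add_ray
    {n : ℕ} (hn : 0 < n) (q : Fin n → Fin n → ℕ)
    (hadm : ∀ i j, q i j ≠ 0 → i < j)
    (hconn : (quiverGraph q).Connected)
    {W : Type*} [Group W] (cs : CoxeterSystem (quiverCoxeterMatrix q) W)
    (y : W)
    (hyP : y ∈ Subgroup.closure (cs.simple '' {j : Fin n | j ≠ ⟨0, hn⟩}))
    (hy : IsSortableWord cs ((List.finRange n).tail) y)
    (C C' : Set (Fin n → ℝ))
    (hC : IsCSet q cs (List.finRange n) y C)
    (hC' : IsCSet q cs ((List.finRange n).tail) y C') :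
    {f : Module.Dual ℝ (Fin n → ℝ) | ∀ β ∈ C, 0 ≤ f β} =
      {f : Module.Dual ℝ (Fin n → ℝ) |
          f (simpleRootV ⟨0, hn⟩) = 0 ∧ ∀ β ∈ C', 0 ≤ f β} +
      {f : Module.Dual ℝ (Fin n → ℝ) | ∃ t : ℝ, 0 ≤ t ∧
          f = t • (LinearMap.proj (R := ℝ) (φ := fun _ : Fin n => ℝ) ⟨0, hn⟩)} := by
  classical
  set z : Fin n := ⟨0, hn⟩ with hzdef
  have hne : List.finRange n ≠ [] := by
    intro h
    have := congrArg List.length h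
    rw [List.length_finRange] at this
    simp at this
    omega
  have hfr : List.finRange n = z :: (List.finRange n).tail := by
    have h1 := List.cons_head_tail hne
    have h2 : (List.finRange n).head hne = z := by
      rw [List.head_eq_getElem_zero hne, List.getElem_finRange]
      ext
      simp [hzdef]
    rw [h2] at h1
    exact h1.symm
  have hztail : z ∉ (List.finRange n).tail := by
    have hnd := List.nodup_finRange n
    rw [hfr] at hnd
    exact (List.nodup_cons.mp hnd).1
  rw [hfr] at hC
  cases hC with
  | down hlen hsub =>
    exfalso
    obtain ⟨L, hL, _, hred, hπ⟩ := hy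
    have hzflat : z ∉ L.flatten := by
      intro h
      obtain ⟨l, hlL, hzl⟩ := List.mem_flatten.mp h
      exact hztail ((hL l hlL).subset hzl)
    exact CProof.no_left_descent_of_avoiding cs hzflat hπ hlen
  | up hlen hsub =>
    rename_i C₂
    have hC2 : C₂ = C' := CProof.isCSet_unique hsub hC'
    subst hC2
    have hcoord : ∀ β ∈ C₂, β z = 0 := CProof.isCSet_coord_zero hC' hztail
    ext f
    simp only [Set.mem_setOf_eq, Set.mem_add]
    set pr : Module.Dual ℝ (Fin n → ℝ) :=
      LinearMap.proj (R := ℝ) (φ := fun _ : Fin n => ℝ) z with hpr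
    have hpre : pr (simpleRootV z) = 1 := by
      rw [hpr]
      simp [simpleRootV]
    constructor
    · intro hf
      have hfz : 0 ≤ f (simpleRootV z) := hf _ (Set.mem_insert _ _)
      refine ⟨f - f (simpleRootV z) • pr, ⟨?_, ?_⟩,
        f (simpleRootV z) • pr, ⟨f (simpleRootV z), hfz, rfl⟩, by abel⟩
      · rw [LinearMap.sub_apply, LinearMap.smul_apply, hpre]
        simp
      · intro β hβ
        rw [LinearMap.sub_apply, LinearMap.smul_apply, hpr]
        have : (LinearMap.proj (R := ℝ) (φ := fun _ : Fin n => ℝ) z) β = 0 := by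
          simpa using hcoord β hβ
        rw [this, smul_zero, sub_zero]
        exact hf β (Set.mem_insert_of_mem _ hβ)
    · rintro ⟨g, ⟨hg0, hgC⟩, h, ⟨t, ht0, rfl⟩, rfl⟩
      intro β hβ
      rcases Set.mem_insert_iff.mp hβ with rfl | hβC
      · rw [LinearMap.add_apply, hg0, LinearMap.smul_apply, hpre]
        simpa using ht0
      · rw [LinearMap.add_apply, LinearMap.smul_apply, hpr]
        have : (LinearMap.proj (R := ℝ) (φ := fun _ : Fin n => ℝ) z) β = 0 := by
          simpa using hcoord β hβC
        rw [this, smul_zero, add_zero]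
        exact hgC β hβC
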